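/- In any double algebra, the restriction $\Phi_L|_B : B \to L$ is an algebra isomorphism of vertical algebras with inverse $\Phi_B|_L : L \to B$; in particular for all $b, b' \in B$, $\Phi_L(b)\circ\Phi_L(b') = \Phi_L(b\star b')$. -/
import Mathlib


/-- A double algebra over a commutative ring `k`: a `k`-module `A` with two
associative unital bilinear multiplications, the vertical `vmul` (written `∘` in the
paper, unit `e`) and the horizontal `hmul` (written `⋆`, unit `i`), satisfying
axioms A1–A8 of Szlachányi's Definition 1.1. -/
structure DoubleAlgebra (k : Type*) (A : Type*) [CommRing k] [AddCommGroup A]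
    [Module k A] where
  vmul : A →ₗ[k] A →ₗ[k] A
  hmul : A →ₗ[k] A →ₗ[k] A
  e : A
  i : A
  vmul_assoc : ∀ a b c, vmul (vmul a b) c = vmul a (vmul b c)
  hmul_assoc : ∀ a b c, hmul (hmul a b) c = hmul a (hmul b c)
  vmul_e : ∀ a, vmul a e = a
  e_vmul : ∀ a, vmul e a = a
  hmul_i : ∀ a, hmul a i = a
  i_hmul : ∀ a, hmul i a = a
  A1 : ∀ a b, vmul (hmul a e) b = hmul (vmul (hmul a e) i) b
  A2 : ∀ a b, vmul a (hmul b e) = hmul (vmul i (hmul b e)) a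
  A3 : ∀ a b, hmul (vmul a i) b = vmul (hmul (vmul a i) e) b
  A4 : ∀ a b, hmul a (vmul b i) = vmul (hmul e (vmul b i)) a
  A5 : ∀ a b, vmul a (hmul e b) = hmul a (vmul i (hmul e b))
  A6 : ∀ a b, vmul (hmul e a) b = hmul b (vmul (hmul e a) i)
  A7 : ∀ a b, hmul a (vmul i b) = vmul a (hmul e (vmul i b))
  A8 : ∀ a b, hmul (vmul i a) b = vmul b (hmul (vmul i a) e)

variable {k A : Type*} [CommRing k] [AddCommGroup A] [Module k A]

/-- `Φ_L(a) = a ⋆ e`. -/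
def DoubleAlgebra.PhiL (D : DoubleAlgebra k A) (a : A) : A := D.hmul a D.e
/-- `Φ_R(a) = e ⋆ a`. -/
def DoubleAlgebra.PhiR (D : DoubleAlgebra k A) (a : A) : A := D.hmul D.e a
/-- `Φ_B(a) = a ∘ i`. -/
def DoubleAlgebra.PhiB (D : DoubleAlgebra k A) (a : A) : A := D.vmul a D.i
/-- `Φ_T(a) = i ∘ a`. -/
def DoubleAlgebra.PhiT (D : DoubleAlgebra k A) (a : A) : A := D.vmul D.i a

/-- `Φ_L|_B : B → L` is an algebra isomorphism of vertical algebras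
with inverse `Φ_B|_L`; in particular `Φ_L(b)∘Φ_L(b') = Φ_L(b⋆b')` for `b,b' ∈ B`. -/
theorem stmt4 (D : DoubleAlgebra k A) :
    (∀ b ∈ Set.range D.PhiB, D.PhiL b ∈ Set.range D.PhiL) ∧
    (∀ l ∈ Set.range D.PhiL, D.PhiB l ∈ Set.range D.PhiB) ∧
    (∀ b ∈ Set.range D.PhiB, D.PhiB (D.PhiL b) = b) ∧
    (∀ l ∈ Set.range D.PhiL, D.PhiL (D.PhiB l) = l) ∧
    (∀ b ∈ Set.range D.PhiB, ∀ b' ∈ Set.range D.PhiB,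
      D.vmul (D.PhiL b) (D.PhiL b') = D.PhiL (D.hmul b b')) ∧
    D.PhiL D.i = D.e := by
  have hBL : ∀ b ∈ Set.range D.PhiB, D.PhiB (D.PhiL b) = b := by
    rintro _ ⟨a, rfl⟩
    simp only [DoubleAlgebra.PhiB, DoubleAlgebra.PhiL]
    rw [← D.A3 a D.i, D.hmul_i]
  refine ⟨fun b _ => ⟨b, rfl⟩, fun l _ => ⟨l, rfl⟩, hBL, ?_, ?_, ?_⟩
  · rintro _ ⟨a, rfl⟩
    simp only [DoubleAlgebra.PhiB, DoubleAlgebra.PhiL]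
    rw [← D.A1 a D.e, D.vmul_e]
  · rintro b hb b' _
    simp only [DoubleAlgebra.PhiL]
    rw [D.A1 b (D.hmul b' D.e)]
    have := hBL b hb
    simp only [DoubleAlgebra.PhiB, DoubleAlgebra.PhiL] at this
    rw [this, ← D.hmul_assoc]
  · simp only [DoubleAlgebra.PhiL, D.i_hmul]
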